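/- Let n ≥ 2 and 1 ≤ r < n be integers, let h be a homeomorphism of 𝔠_{n,r}, and let τ, η be words. Then for every word τ′ with U_{τ′} ⊆ h(U_τ) there exist a word η′ with U_{η′} ⊆ h(U_η) and a nonempty χ ∈ List (Fin n) such that h(U_{τ⌢χ}) ⊆ U_{τ′} and h(U_{η⌢χ}) ⊆ U_{η′}. -/

import Mathlib

open Set

namespace HigmanAut

/-- The one-sided infinite sequence space `𝔠_n` on `n` letters. -/
abbrev Cn (n : ℕ) : Type := ℕ → Fin n

/-- The Cantor space `𝔠_{n,r} = Fin r × (ℕ → Fin n)` (with the product topology,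
`Fin r` and `Fin n` discrete). -/
abbrev CNR (n r : ℕ) : Type := Fin r × Cn n

/-- A word: a letter from `Fin r` together with a finite list over `Fin n`. -/
abbrev Word (n r : ℕ) : Type := Fin r × List (Fin n)

/-- Self-homeomorphisms of `𝔠_{n,r}`. -/
abbrev Homeo (n r : ℕ) : Type := CNR n r ≃ₜ CNR n r

/-- Append a finite list to a word: `ν⌢w`. -/
def wApp {n r : ℕ} (ν : Word n r) (w : List (Fin n)) : Word n r := (ν.1, ν.2 ++ w)

/-- The point `ν⌢x` of `𝔠_{n,r}` determined by a word `ν` followed by `x ∈ 𝔠_n`. -/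
def wCat {n r : ℕ} (ν : Word n r) (x : Cn n) : CNR n r :=
  (ν.1, fun i => if h : i < ν.2.length then ν.2.get ⟨i, h⟩ else x (i - ν.2.length))

/-- The cone `U_ν` of a word `ν`. -/
def cone {n r : ℕ} (ν : Word n r) : Set (CNR n r) :=
  {p | p.1 = ν.1 ∧ ∀ (i : ℕ) (h : i < ν.2.length), p.2 i = ν.2.get ⟨i, h⟩}

/-- Membership in the Higman--Thompson group `G_{n,r}`: `g` is a prefix code map,
i.e. there are `k ≥ 1` and words `ν i`, `η i` whose cones partition `𝔠_{n,r}`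
with `g(ν i ⌢ x) = η i ⌢ x` for all `i`, `x`. -/
def IsHigman {n r : ℕ} (g : Homeo n r) : Prop :=
  ∃ k : ℕ, 0 < k ∧ ∃ ν η : Fin k → Word n r,
    (∀ p : CNR n r, ∃! i : Fin k, p ∈ cone (ν i)) ∧
    (∀ p : CNR n r, ∃! i : Fin k, p ∈ cone (η i)) ∧
    (∀ (i : Fin k) (x : Cn n), g (wCat (ν i) x) = wCat (η i) x)

/-- The Higman--Thompson group `G_{n,r}` as a set of homeomorphisms. -/
def higmanSet (n r : ℕ) : Set (Homeo n r) := {g | IsHigman g}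

/-- Conjugation: in the paper's right-action notation this is `g ↦ h⁻¹ g h`
(as a left function, `x ↦ h (g (h⁻¹ x))`). -/
def conjH {n r : ℕ} (h g : Homeo n r) : Homeo n r := (h.symm.trans g).trans h

/-- `h` acts in the same fashion on `U_α` and `U_β`: there are words `α'`, `β'`
and a common local action `f` with `h(α⌢x) = α'⌢f(x)` and `h(β⌢x) = β'⌢f(x)`. -/
def SameFashion {n r : ℕ} (h : Homeo n r) (α β : Word n r) : Prop :=
  ∃ (α' β' : Word n r) (f : Cn n → Cn n),
    (∀ x : Cn n, h (wCat α x) = wCat α' (f x)) ∧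
    (∀ x : Cn n, h (wCat β x) = wCat β' (f x))

/-- Tail equivalence on `𝔠_{n,r}`. -/
def TailEq {n r : ℕ} (x y : CNR n r) : Prop :=
  ∃ (ν η : Word n r) (z : Cn n), x = wCat ν z ∧ y = wCat η z

/-- `h` is pointwise canonical. -/
def PtwiseCanonical {n r : ℕ} (h : Homeo n r) : Prop :=
  ∀ x : CNR n r, ∃ (η₁ η₂ : Word n r) (y : Cn n), x = wCat η₁ y ∧ h x = wCat η₂ y

/-- `h` is densely canonical. -/
def DenselyCanonical {n r : ℕ} (h : Homeo n r) : Prop :=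
  ∀ U : Set (CNR n r), IsOpen U → U.Nonempty →
    ∃ η ζ : Word n r, cone η ⊆ U ∧ ∀ x : Cn n, h (wCat η x) = wCat ζ x

/-- `h` belongs to `H_{n,r,∼}`: `x ∼ y` iff `h(x) ∼ h(y)`. -/
def PreservesTailEq {n r : ℕ} (h : Homeo n r) : Prop :=
  ∀ x y : CNR n r, TailEq x y ↔ TailEq (h x) (h y)

/-- `ν` is a prefix of `η`, i.e. `U_η ⊆ U_ν`. -/
def WPrefix {n r : ℕ} (ν η : Word n r) : Prop := cone η ⊆ cone ν

/-- Two words are incomparable if neither is a prefix of the other. -/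
def Incomp {n r : ℕ} (ν η : Word n r) : Prop := ¬ WPrefix ν η ∧ ¬ WPrefix η ν

lemma mem_cone_wCat {n r : ℕ} (ν : Word n r) (z : Cn n) : wCat ν z ∈ cone ν := by
  refine ⟨rfl, fun i h => ?_⟩
  simp [wCat, h]

lemma isOpen_cone {n r : ℕ} (ν : Word n r) : IsOpen (cone ν) := by
  have : cone ν = (Prod.fst ⁻¹' {ν.1}) ∩
      ⋂ i : Fin ν.2.length, {p : CNR n r | p.2 i = ν.2.get i} := by
    ext p
    simp only [cone, mem_setOf_eq, mem_inter_iff, mem_preimage, mem_singleton_iff, mem_iInter]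
    exact ⟨fun ⟨h1, h2⟩ => ⟨h1, fun i => h2 i i.2⟩, fun ⟨h1, h2⟩ => ⟨h1, fun i hi => h2 ⟨i, hi⟩⟩⟩
  rw [this]
  exact (isOpen_discrete _).preimage continuous_fst |>.inter
    (isOpen_iInter_of_finite fun i => by
      show IsOpen ((fun p : CNR n r => p.2 i) ⁻¹' {ν.2.get i})
      exact (isOpen_discrete _).preimage ((continuous_apply (i : ℕ)).comp continuous_snd))

lemma exists_agree {n r : ℕ} {U : Set (CNR n r)} (hU : IsOpen U) {p : CNR n r} (hp : p ∈ U) :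
    ∃ m : ℕ, ∀ q : CNR n r, q.1 = p.1 → (∀ i < m, q.2 i = p.2 i) → q ∈ U := by
  obtain ⟨u, v, hu, hv, hpu, hpv, huv⟩ := isOpen_prod_iff.mp hU p.1 p.2 hp
  obtain ⟨I, t, hI, hsub⟩ := isOpen_pi_iff.mp hv p.2 hpv
  refine ⟨I.sup id + 1, fun q hq1 hq2 => ?_⟩
  apply huv
  refine ⟨by rw [hq1]; exact hpu, hsub fun i hi => ?_⟩
  rw [hq2 i (by have : (i : ℕ) ≤ I.sup id := Finset.le_sup (f := id) hi; omega)]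
  exact (hI i hi).2

lemma cone_wApp_subset {n r : ℕ} (ν : Word n r) (χ : List (Fin n)) :
    cone (wApp ν χ) ⊆ cone ν := by
  rintro p ⟨h1, h2⟩
  refine ⟨h1, fun i hi => ?_⟩
  have := h2 i (by simp [wApp]; omega)
  rw [this]
  simp only [wApp, List.get_eq_getElem]
  exact List.getElem_append_left hi

lemma wApp_assoc {n r : ℕ} (ν : Word n r) (a b : List (Fin n)) :
    wApp (wApp ν a) b = wApp ν (a ++ b) := by
  simp [wApp]

lemma exists_extension {n r : ℕ} (hn : 2 ≤ n) (ν : Word n r) {p : CNR n r} (hp : p ∈ cone ν)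
    (m : ℕ) :
    ∃ χ : List (Fin n), χ ≠ [] ∧
      cone (wApp ν χ) ⊆ {q : CNR n r | q.1 = p.1 ∧ ∀ i < m, q.2 i = p.2 i} := by
  set L := max m (ν.2.length + 1) with hL
  refine ⟨List.ofFn (fun j : Fin (L - ν.2.length) => p.2 (ν.2.length + j)), ?_, ?_⟩
  · intro hcon
    have := congrArg List.length hcon
    simp at this
    omega
  · rintro q ⟨hq1, hq2⟩
    have hlen : (wApp ν (List.ofFn fun j : Fin (L - ν.2.length) => p.2 (ν.2.length + j))).2.length = L := by
      simp [wApp]; omega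
    refine ⟨hq1.trans hp.1.symm, fun i hi => ?_⟩
    have hiL : i < L := lt_of_lt_of_le hi (le_max_left _ _)
    have := hq2 i (by omega)
    rw [this]
    simp only [wApp, List.get_eq_getElem]
    by_cases hc : i < ν.2.length
    · rw [List.getElem_append_left hc]
      exact (hp.2 i hc).symm
    · rw [List.getElem_append_right (by omega)]
      simp only [List.getElem_ofFn, Fin.val_mk]
      rw [show ν.2.length + (i - ν.2.length) = i from by omega]

/-- For every cone `U_{τ'} ⊆ h(U_τ)` there are a cone
`U_{η'} ⊆ h(U_η)` and a nonempty `χ` with `h(U_{τ⌢χ}) ⊆ U_{τ'}` and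
`h(U_{η⌢χ}) ⊆ U_{η'}`. -/
theorem common_refining_suffix (n r : ℕ) (hn : 2 ≤ n) (hr1 : 1 ≤ r) (hrn : r < n)
    (h : Homeo n r) (τ η τ' : Word n r) (hτ' : cone τ' ⊆ ⇑h '' cone τ) :
    ∃ (η' : Word n r) (χ : List (Fin n)), χ ≠ [] ∧
      cone η' ⊆ ⇑h '' cone η ∧
      ⇑h '' cone (wApp τ χ) ⊆ cone τ' ∧
      ⇑h '' cone (wApp η χ) ⊆ cone η' := by
  set z0 : Cn n := fun _ => (⟨0, by omega⟩ : Fin n) with hz0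
  -- Step 1: find χ₀ with h(U_{τ⌢χ₀}) ⊆ U_{τ'}
  have hp0 : wCat τ' z0 ∈ cone τ' := mem_cone_wCat τ' z0
  obtain ⟨q0, hq0τ, hq0⟩ := hτ' hp0
  have hpre : IsOpen (⇑h ⁻¹' cone τ') := (isOpen_cone τ').preimage h.continuous
  have hq0mem : q0 ∈ ⇑h ⁻¹' cone τ' := by rw [mem_preimage, hq0]; exact hp0
  obtain ⟨m1, hm1⟩ := exists_agree hpre hq0mem
  obtain ⟨χ0, hχ0ne, hχ0sub⟩ := exists_extension hn τ hq0τ m1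
  have hτstep : ⇑h '' cone (wApp τ χ0) ⊆ cone τ' := by
    rintro _ ⟨p, hp, rfl⟩
    exact hm1 p (hχ0sub hp).1 (fun i hi => (hχ0sub hp).2 i hi)
  -- Step 2: construct η'
  set p1 : CNR n r := wCat (wApp η χ0) z0 with hp1def
  have hp1 : p1 ∈ cone (wApp η χ0) := mem_cone_wCat _ _
  have hp1η : p1 ∈ cone η := cone_wApp_subset η χ0 hp1
  set q1 : CNR n r := h p1 with hq1def
  have hpre2 : IsOpen (⇑h.symm ⁻¹' cone η) := (isOpen_cone η).preimage h.symm.continuous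
  have hq1mem : q1 ∈ ⇑h.symm ⁻¹' cone η := by
    rw [mem_preimage, hq1def, Homeomorph.symm_apply_apply]; exact hp1η
  obtain ⟨m2, hm2⟩ := exists_agree hpre2 hq1mem
  set η' : Word n r := (q1.1, List.ofFn fun j : Fin m2 => q1.2 j) with hη'def
  have hη'len : η'.2.length = m2 := by simp [hη'def]
  have hq1η' : q1 ∈ cone η' := by
    refine ⟨rfl, fun i hi => ?_⟩
    simp only [hη'def, List.get_eq_getElem, List.getElem_ofFn]
  have hη'sub : cone η' ⊆ ⇑h '' cone η := by
    intro p hp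
    have hagree : ∀ i < m2, p.2 i = q1.2 i := by
      intro i hi
      have := hp.2 i (by rw [hη'len]; exact hi)
      rw [this]
      simp only [hη'def, List.get_eq_getElem, List.getElem_ofFn]
    have := hm2 p hp.1 hagree
    exact ⟨h.symm p, this, h.apply_symm_apply p⟩
  -- Step 3: extend χ₀ to χ so that h(U_{η⌢χ}) ⊆ U_{η'}
  have hpre3 : IsOpen (⇑h ⁻¹' cone η') := (isOpen_cone η').preimage h.continuous
  have hp1mem3 : p1 ∈ ⇑h ⁻¹' cone η' := hq1η'
  obtain ⟨m3, hm3⟩ := exists_agree hpre3 hp1mem3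
  obtain ⟨χ1, hχ1ne, hχ1sub⟩ := exists_extension hn (wApp η χ0) hp1 m3
  refine ⟨η', χ0 ++ χ1, by simp [hχ0ne], hη'sub, ?_, ?_⟩
  · refine subset_trans (image_mono ?_) hτstep
    rw [← wApp_assoc]; exact cone_wApp_subset _ _
  · rintro _ ⟨p, hp, rfl⟩
    rw [← wApp_assoc] at hp
    exact hm3 p (hχ1sub hp).1 (fun i hi => (hχ1sub hp).2 i hi)

end HigmanAut
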